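/- Kummer's second transformation: let c ∈ ℂ with c ∉ {0,−1,−2,…} and 2c−1 ∉ {0,−1,−2,…}. Then for every w ∈ ℂ, ∑_{j=0}^∞ (w²/16)^j/((c)_j j!) = e^{−w/2} · ∑_{n=0}^∞ (c−1/2)_n w^n/((2c−1)_n n!); equivalently, F(c; w²/16) = e^{−w/2} F(c−1/2; 2c−1; w), where F(c;·) is the ₀F₁ function and F(a;c;·) the confluent function. -/

import Mathlib

open Complex Finset

namespace Kummer15

/-- Coefficients of `exp (-w/2)`. -/
noncomputable def E (m : ℕ) : ℂ := (-(1/2 : ℂ)) ^ m / m.factorial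

/-- Coefficients of the confluent hypergeometric series `F(a; b; w)`. -/
noncomputable def B (a b : ℂ) (k : ℕ) : ℂ :=
  (ascPochhammer ℂ k).eval a / ((ascPochhammer ℂ k).eval b * k.factorial)

/-- Cauchy-product coefficients of `exp (-w/2) * F(a; b; w)`. -/
noncomputable def U (a b : ℂ) (N : ℕ) : ℂ :=
  ∑ k ∈ range (N + 1), E (N - k) * B a b k

/-- Coefficients of the `₀F₁` series in `w` (only even powers appear). -/
noncomputable def G (c : ℂ) (j : ℕ) : ℂ :=
  (1/16 : ℂ) ^ j / ((ascPochhammer ℂ j).eval c * j.factorial)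

lemma poch_ne_zero {x : ℂ} (hx : ∀ n : ℕ, x + (n : ℂ) ≠ 0) (n : ℕ) :
    (ascPochhammer ℂ n).eval x ≠ 0 := by
  induction n with
  | zero => simp [ascPochhammer_zero]
  | succ n ih =>
      rw [ascPochhammer_succ_eval]
      exact mul_ne_zero ih (hx n)

lemma E1 (m : ℕ) : ((m : ℂ) + 1) * E (m + 1) = -(1/2) * E m := by
  have hm : ((m.factorial : ℂ)) ≠ 0 := Nat.cast_ne_zero.mpr m.factorial_ne_zero
  have hm1 : ((m : ℂ) + 1) ≠ 0 := Nat.cast_add_one_ne_zero m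
  simp only [E, Nat.factorial_succ, pow_succ]
  push_cast
  field_simp

lemma B1 {a b : ℂ} (hb : ∀ n : ℕ, b + (n : ℂ) ≠ 0) (k : ℕ) :
    ((k : ℂ) + 1) * (b + k) * B a b (k + 1) = (a + k) * B a b k := by
  have hpb := poch_ne_zero hb k
  have hbk := hb k
  have hkf : ((k.factorial : ℂ)) ≠ 0 := Nat.cast_ne_zero.mpr k.factorial_ne_zero
  have hk1 : ((k : ℂ) + 1) ≠ 0 := Nat.cast_add_one_ne_zero k
  simp only [B, ascPochhammer_succ_eval, Nat.factorial_succ]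
  push_cast
  field_simp


variable {a b : ℂ}

/-- Shift the `E`-index down by one, picking up a factor `-(1/2)`. -/
lemma sumE' (hb : ∀ n : ℕ, b + (n : ℂ) ≠ 0) (f : ℕ → ℂ) (m : ℕ) :
    ∑ k ∈ range (m + 2), f k * ((m + 1 - k : ℕ) : ℂ) * E (m + 1 - k) * B a b k
      = -(1/2) * ∑ k ∈ range (m + 1), f k * E (m - k) * B a b k := by
  rw [sum_range_succ]
  simp only [Nat.sub_self, Nat.cast_zero, mul_zero, zero_mul, add_zero]
  rw [mul_sum]
  refine sum_congr rfl fun k hk => ?_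
  have hk' : k ≤ m := Nat.lt_succ_iff.mp (mem_range.mp hk)
  have h1 : m + 1 - k = (m - k) + 1 := by omega
  rw [h1]
  push_cast
  have := E1 (m - k)
  calc f k * ((m - k : ℕ) + 1 : ℂ) * E (m - k + 1) * B a b k
      = f k * ((((m - k : ℕ) : ℂ) + 1) * E (m - k + 1)) * B a b k := by ring
    _ = f k * (-(1/2) * E (m - k)) * B a b k := by rw [this]
    _ = -(1/2) * (f k * E (m - k) * B a b k) := by ring

lemma sumW (hb : ∀ n : ℕ, b + (n : ℂ) ≠ 0) (m : ℕ) :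
    ∑ k ∈ range (m + 2), (k : ℂ) * E (m + 1 - k) * B a b k
      = ((m : ℂ) + 1) * U a b (m + 1) + (1/2) * U a b m := by
  have h1 : ∀ k ∈ range (m + 2),
      (k : ℂ) * E (m + 1 - k) * B a b k
        = ((m : ℂ) + 1) * (E (m + 1 - k) * B a b k)
          - (1 : ℂ) * ((m + 1 - k : ℕ) : ℂ) * E (m + 1 - k) * B a b k := by
    intro k hk
    have hk' : k ≤ m + 1 := Nat.lt_succ_iff.mp (mem_range.mp hk)
    have : ((m + 1 - k : ℕ) : ℂ) = ((m : ℂ) + 1) - (k : ℂ) := by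
      push_cast [Nat.cast_sub hk']; ring
    rw [this]; ring
  rw [sum_congr rfl h1, sum_sub_distrib, ← mul_sum,
    sumE' hb (fun _ => (1 : ℂ)) m]
  have : U a b (m + 1) = ∑ k ∈ range (m + 2), E (m + 1 - k) * B a b k := rfl
  have e1 : ∑ i ∈ range (m + 2), ((m : ℂ) + 1) * (E (m + 1 - i) * B a b i)
      = ((m : ℂ) + 1) * U a b (m + 1) := by rw [this, mul_sum]
  simp only [one_mul]
  rw [← this, show ∑ x ∈ range (m + 1), E (m - x) * B a b x = U a b m from rfl]
  ring

lemma sumS3 (hb : ∀ n : ℕ, b + (n : ℂ) ≠ 0) (m : ℕ) :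
    ∑ k ∈ range (m + 3), (k : ℂ) * ((k : ℂ) + b - 1) * E (m + 2 - k) * B a b k
      = a * U a b (m + 1)
        + ∑ k ∈ range (m + 2), (k : ℂ) * E (m + 1 - k) * B a b k := by
  rw [sum_range_succ']
  simp only [Nat.cast_zero, zero_mul, add_zero]
  have h1 : ∀ k ∈ range (m + 2),
      ((k + 1 : ℕ) : ℂ) * (((k + 1 : ℕ) : ℂ) + b - 1) * E (m + 2 - (k + 1)) * B a b (k + 1)
        = a * (E (m + 1 - k) * B a b k) + (k : ℂ) * E (m + 1 - k) * B a b k := by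
    intro k hk
    have h2 : m + 2 - (k + 1) = m + 1 - k := by omega
    rw [h2]
    push_cast
    have hB := B1 (a := a) hb k
    calc ((k : ℂ) + 1) * ((k : ℂ) + 1 + b - 1) * E (m + 1 - k) * B a b (k + 1)
        = (((k : ℂ) + 1) * (b + (k : ℂ)) * B a b (k + 1)) * E (m + 1 - k) := by ring
      _ = ((a + (k : ℂ)) * B a b k) * E (m + 1 - k) := by rw [hB]
      _ = a * (E (m + 1 - k) * B a b k) + (k : ℂ) * E (m + 1 - k) * B a b k := by ring
  rw [sum_congr rfl h1, sum_add_distrib, ← mul_sum]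
  rfl

/-- The key two-step recurrence for the Cauchy-product coefficients. -/
lemma Urec (hb : ∀ n : ℕ, b + (n : ℂ) ≠ 0) (hba : b = 2 * a) (N : ℕ) :
    ((N : ℂ) + 2) * (((N : ℂ) + 1) + b) * U a b (N + 2) = (1/4) * U a b N := by
  have hU : U a b (N + 2) = ∑ k ∈ range (N + 3), E (N + 2 - k) * B a b k := rfl
  rw [hU, mul_sum]
  have h1 : ∀ k ∈ range (N + 3),
      ((N : ℂ) + 2) * (((N : ℂ) + 1) + b) * (E (N + 2 - k) * B a b k)
        = ((N : ℂ) + 1 + b) * ((N + 2 - k : ℕ) : ℂ) * E (N + 2 - k) * B a b k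
          + (k : ℂ) * ((N + 2 - k : ℕ) : ℂ) * E (N + 2 - k) * B a b k
          + (k : ℂ) * ((k : ℂ) + b - 1) * E (N + 2 - k) * B a b k := by
    intro k hk
    have hk' : k ≤ N + 2 := Nat.lt_succ_iff.mp (mem_range.mp hk)
    have hc : ((N + 2 - k : ℕ) : ℂ) = ((N : ℂ) + 2) - (k : ℂ) := by
      push_cast [Nat.cast_sub hk']; ring
    rw [hc]; ring
  rw [sum_congr rfl h1, sum_add_distrib, sum_add_distrib]
  have hS1 := sumE' (a := a) hb (fun _ => (N : ℂ) + 1 + b) (N + 1)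
  have hS2 := sumE' (a := a) hb (fun k => (k : ℂ)) (N + 1)
  rw [hS1, hS2, sumS3 hb N, sumW hb N]
  have hU1 : ∑ k ∈ range (N + 2), ((N : ℂ) + 1 + b) * E (N + 1 - k) * B a b k
      = ((N : ℂ) + 1 + b) * U a b (N + 1) := by
    rw [U, mul_sum]; exact sum_congr rfl fun k _ => by ring
  rw [hU1, hba]
  ring


lemma U_eval {c : ℂ} (hb : ∀ n : ℕ, (2 * c - 1) + (n : ℂ) ≠ 0)
    (hcn : ∀ n : ℕ, c + (n : ℂ) ≠ 0) (j : ℕ) :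
    U (c - 1/2) (2 * c - 1) (2 * j) = G c j ∧ U (c - 1/2) (2 * c - 1) (2 * j + 1) = 0 := by
  set a : ℂ := c - 1/2 with ha
  set b : ℂ := 2 * c - 1 with hbdef
  have hba : b = 2 * a := by rw [ha, hbdef]; ring
  have hb0 : b ≠ 0 := by simpa using hb 0
  induction j with
  | zero =>
      constructor
      · simp [U, G, E, B, ascPochhammer_zero]
      · have : U a b 1 = E 1 * B a b 0 + E 0 * B a b 1 := by
          simp [U, Finset.sum_range_succ]
        rw [this]
        simp only [E, B, ascPochhammer_zero, ascPochhammer_one, Polynomial.eval_one,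
          Polynomial.eval_X, Nat.factorial_one, Nat.factorial_zero]
        rw [hba] at hb0 ⊢
        have ha0 : a ≠ 0 := by
          intro h; apply hb0; rw [h]; ring
        field_simp
        ring
  | succ j ih =>
      obtain ⟨ihe, iho⟩ := ih
      have hpc := poch_ne_zero hcn
      have hcj := hcn j
      have hjf : ((j.factorial : ℂ)) ≠ 0 := Nat.cast_ne_zero.mpr j.factorial_ne_zero
      have hj1 : ((j : ℂ) + 1) ≠ 0 := Nat.cast_add_one_ne_zero j
      constructor
      · -- even case
        have hrec := Urec (a := a) hb hba (2 * j)
        have harith : 2 * (j + 1) = 2 * j + 2 := by ring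
        rw [harith]
        have hG : (((2 * j : ℕ) : ℂ) + 2) * ((((2 * j : ℕ) : ℂ) + 1) + b) * G c (j + 1)
            = (1/4) * G c j := by
          simp only [G, ascPochhammer_succ_eval, Nat.factorial_succ]
          rw [hbdef]
          push_cast
          field_simp [hpc j, hcj, hjf, hj1]
          ring
        have hne : (((2 * j : ℕ) : ℂ) + 2) * ((((2 * j : ℕ) : ℂ) + 1) + b) ≠ 0 := by
          apply mul_ne_zero
          · have : (((2 * j : ℕ) : ℂ) + 2) = ((2 * j + 2 : ℕ) : ℂ) := by push_cast; ring
            rw [this]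
            exact Nat.cast_ne_zero.mpr (by omega)
          · have : (((2 * j : ℕ) : ℂ) + 1) + b = 2 * (c + j) := by
              rw [hbdef]; push_cast; ring
            rw [this]
            exact mul_ne_zero two_ne_zero hcj
        apply mul_left_cancel₀ hne
        rw [mul_assoc, ← mul_assoc, hrec, ihe, hG]
      · -- odd case
        have hrec := Urec (a := a) hb hba (2 * j + 1)
        have harith : 2 * (j + 1) + 1 = (2 * j + 1) + 2 := by ring
        rw [harith]
        have hne : (((2 * j + 1 : ℕ) : ℂ) + 2) * ((((2 * j + 1 : ℕ) : ℂ) + 1) + b) ≠ 0 := by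
          apply mul_ne_zero
          · have : (((2 * j + 1 : ℕ) : ℂ) + 2) = ((2 * j + 3 : ℕ) : ℂ) := by push_cast; ring
            rw [this]
            exact Nat.cast_ne_zero.mpr (by omega)
          · have : (((2 * j + 1 : ℕ) : ℂ) + 1) + b = b + ((2 * j + 2 : ℕ) : ℂ) := by
              push_cast; ring
            rw [this]
            exact hb (2 * j + 2)
        apply mul_left_cancel₀ hne
        rw [mul_assoc, ← mul_assoc, hrec, iho]
        ring


lemma summable_E (w : ℂ) : Summable (fun m : ℕ => ‖E m * w ^ m‖) := by
  refine (Real.summable_pow_div_factorial (‖w‖ / 2)).congr fun m => ?_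
  have h2 : ‖(-(1/2) : ℂ)‖ = 1/2 := by
    rw [norm_neg, norm_div, norm_one]
    norm_num [Complex.norm_ofNat]
  rw [norm_mul, E, norm_div, norm_pow, norm_pow, h2, Complex.norm_natCast]
  rw [div_pow]
  have key : ∀ x : ℝ, x ^ m / 2 ^ m / (m.factorial : ℝ) = (1/2 : ℝ) ^ m / (m.factorial : ℝ) * x ^ m := by
    intro x; rw [div_pow, one_pow]; ring
  exact key ‖w‖

lemma summable_B (a b : ℂ) (hb : ∀ n : ℕ, b + (n : ℂ) ≠ 0) (w : ℂ) :
    Summable (fun n : ℕ => ‖B a b n * w ^ n‖) := by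
  apply summable_of_ratio_norm_eventually_le (r := 1/2) (by norm_num)
  set R : ℝ := max (max ‖a‖ (2 * ‖b‖)) (8 * ‖w‖) with hR
  refine Filter.eventually_atTop.mpr ⟨⌈R⌉₊ + 1, fun n hn => ?_⟩
  have hn1 : (1 : ℝ) ≤ (n : ℝ) := by exact_mod_cast Nat.one_le_iff_ne_zero.mpr (by omega)
  have hnR : R ≤ (n : ℝ) := by
    calc R ≤ (⌈R⌉₊ : ℝ) := Nat.le_ceil R
      _ ≤ (n : ℝ) := by exact_mod_cast le_trans (Nat.le_succ _) hn
  have hna : ‖a‖ ≤ (n : ℝ) := le_trans (le_trans (le_max_left _ _) (le_max_left _ _)) hnR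
  have hnb : 2 * ‖b‖ ≤ (n : ℝ) := le_trans (le_trans (le_max_right _ _) (le_max_left _ _)) hnR
  have hnw : 8 * ‖w‖ ≤ (n : ℝ) := le_trans (le_max_right _ _) hnR
  have hden : ((n : ℂ) + 1) * (b + n) ≠ 0 :=
    mul_ne_zero (Nat.cast_add_one_ne_zero n) (hb n)
  have hBrel : B a b (n + 1) * w ^ (n + 1)
      = ((a + n) * w / (((n : ℂ) + 1) * (b + n))) * (B a b n * w ^ n) := by
    have hB1 := B1 (a := a) hb n
    have : B a b (n + 1) = ((a + n) * B a b n) / (((n : ℂ) + 1) * (b + n)) := by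
      rw [eq_div_iff hden]
      linear_combination hB1
    rw [this, pow_succ]
    ring
  have hn0 : ‖B a b n * w ^ n‖ = ‖B a b n * w ^ n‖ := rfl
  rw [Real.norm_eq_abs, Real.norm_eq_abs, _root_.abs_of_nonneg (norm_nonneg _),
    _root_.abs_of_nonneg (norm_nonneg _), hBrel, norm_mul]
  have hfac : ‖(a + n) * w / (((n : ℂ) + 1) * (b + n))‖ ≤ 1/2 := by
    rw [norm_div, div_le_iff₀ (by
      have := hb n
      have h1 : (0:ℝ) < ‖(n : ℂ) + 1‖ := norm_pos_iff.mpr (Nat.cast_add_one_ne_zero n)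
      have h2 : (0:ℝ) < ‖b + (n : ℂ)‖ := norm_pos_iff.mpr (hb n)
      rw [norm_mul]; positivity)]
    have h1 : ‖(a + (n : ℂ)) * w‖ ≤ (‖a‖ + (n : ℝ)) * ‖w‖ := by
      rw [norm_mul]
      apply mul_le_mul_of_nonneg_right _ (norm_nonneg w)
      calc ‖a + (n : ℂ)‖ ≤ ‖a‖ + ‖(n : ℂ)‖ := norm_add_le _ _
        _ = ‖a‖ + (n : ℝ) := by rw [Complex.norm_natCast]
    have h2 : (n : ℝ) - ‖b‖ ≤ ‖b + (n : ℂ)‖ := by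
      have := norm_sub_norm_le ((n : ℂ)) (-b)
      simp only [norm_neg, sub_neg_eq_add] at this
      calc (n : ℝ) - ‖b‖ = ‖(n : ℂ)‖ - ‖-b‖ := by rw [Complex.norm_natCast, norm_neg]
        _ ≤ ‖(n : ℂ) - -b‖ := norm_sub_norm_le _ _
        _ = ‖b + (n : ℂ)‖ := by rw [sub_neg_eq_add, add_comm]
    have h3 : ‖((n : ℂ) + 1)‖ = (n : ℝ) + 1 := by
      rw [show ((n : ℂ) + 1) = ((n + 1 : ℕ) : ℂ) by push_cast; ring, Complex.norm_natCast]
      push_cast; ring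
    rw [norm_mul ((n : ℂ) + 1) (b + (n : ℂ)), h3]
    have key : (‖a‖ + (n : ℝ)) * ‖w‖ ≤ 2 * (n : ℝ) * ((n : ℝ) / 8) := by
      apply mul_le_mul (by linarith) (by linarith) (norm_nonneg w) (by linarith)
    nlinarith [norm_nonneg w, norm_nonneg b, norm_nonneg (b + (n : ℂ))]
  calc ‖(a + n) * w / (((n : ℂ) + 1) * (b + n))‖ * ‖B a b n * w ^ n‖
      ≤ (1/2) * ‖B a b n * w ^ n‖ :=
        mul_le_mul_of_nonneg_right hfac (norm_nonneg _)

end Kummer15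

open Kummer15 in
/-- Kummer's second transformation:
`F(c; w²/16) = e^(-w/2) F(c-1/2; 2c-1; w)` whenever `c` and `2c-1` are not
nonpositive integers. -/
theorem kummer_second_transformation (c : ℂ)
    (hc : ∀ n : ℕ, c ≠ -(n : ℂ)) (hc2 : ∀ n : ℕ, 2 * c - 1 ≠ -(n : ℂ)) :
    ∀ w : ℂ,
      (∑' j : ℕ, (w ^ 2 / 16) ^ j /
          ((ascPochhammer ℂ j).eval c * (j.factorial : ℂ)))
        = Complex.exp (-w / 2) *
            ∑' n : ℕ, (ascPochhammer ℂ n).eval (c - 1 / 2) * w ^ n /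
              ((ascPochhammer ℂ n).eval (2 * c - 1) * (n.factorial : ℂ)) := by
  intro w
  have hb : ∀ n : ℕ, (2 * c - 1) + (n : ℂ) ≠ 0 := fun n h => hc2 n (by linear_combination h)
  have hcn : ∀ n : ℕ, c + (n : ℂ) ≠ 0 := fun n h => hc n (by linear_combination h)
  have hE := summable_E w
  have hBs := summable_B (c - 1/2) (2 * c - 1) hb w
  have hexp : Complex.exp (-w / 2) = ∑' m : ℕ, E m * w ^ m := by
    rw [Complex.exp_eq_exp_ℂ, NormedSpace.exp_eq_tsum_div]
    exact tsum_congr fun m => by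
      rw [E, show -w / 2 = (-(1/2) : ℂ) * w by ring, mul_pow]; ring
  have hF : (∑' n : ℕ, (ascPochhammer ℂ n).eval (c - 1 / 2) * w ^ n /
              ((ascPochhammer ℂ n).eval (2 * c - 1) * (n.factorial : ℂ)))
      = ∑' n : ℕ, B (c - 1/2) (2 * c - 1) n * w ^ n :=
    tsum_congr fun n => by rw [B]; ring
  rw [hexp, hF, tsum_mul_tsum_eq_tsum_sum_antidiagonal_of_summable_norm hE hBs]
  have hcoef : ∀ N : ℕ,
      ∑ kl ∈ Finset.HasAntidiagonal.antidiagonal N,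
          (E kl.1 * w ^ kl.1) * (B (c - 1/2) (2 * c - 1) kl.2 * w ^ kl.2)
        = U (c - 1/2) (2 * c - 1) N * w ^ N := by
    intro N
    rw [Finset.Nat.sum_antidiagonal_eq_sum_range_succ_mk,
      ← Finset.sum_range_reflect (fun k =>
        (E k * w ^ k) * (B (c - 1/2) (2 * c - 1) (N - k) * w ^ (N - k))) (N + 1)]
    simp only [Nat.add_sub_cancel]
    rw [U, Finset.sum_mul]
    refine Finset.sum_congr rfl fun k hk => ?_
    have hk' : k ≤ N := Nat.lt_succ_iff.mp (Finset.mem_range.mp hk)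
    have h2 : N - (N - k) = k := by omega
    have h3 : (N - k) + k = N := by omega
    rw [h2]
    calc E (N - k) * w ^ (N - k) * (B (c - 1/2) (2 * c - 1) k * w ^ k)
        = E (N - k) * B (c - 1/2) (2 * c - 1) k * w ^ ((N - k) + k) := by
          rw [pow_add]; ring
      _ = E (N - k) * B (c - 1/2) (2 * c - 1) k * w ^ N := by rw [h3]
  rw [tsum_congr hcoef]
  have hinj : Function.Injective (fun j : ℕ => 2 * j) := fun x y h => by simp only at h; omega
  have hsupp : Function.support (fun N => U (c - 1/2) (2 * c - 1) N * w ^ N)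
      ⊆ Set.range (fun j : ℕ => 2 * j) := by
    intro N hN
    rcases Nat.even_or_odd N with ⟨j, hj⟩ | ⟨j, hj⟩
    · exact ⟨j, show 2 * j = N by omega⟩
    · exfalso
      apply hN
      simp only [hj, (U_eval hb hcn j).2, zero_mul]
  rw [← hinj.tsum_eq hsupp]
  refine tsum_congr fun j => ?_
  show (w ^ 2 / 16) ^ j / ((ascPochhammer ℂ j).eval c * (j.factorial : ℂ))
      = U (c - 1/2) (2 * c - 1) (2 * j) * w ^ (2 * j)
  rw [(U_eval hb hcn j).1, G, pow_mul]
  ring
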